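/- Let X be a countable set and σ a symmetric irreflexive binary relation on X such that the simple graph on X with adjacency σ is acyclic (so (X, σ) is an undirected forest). Then (X, σ) is unary FA-presentable if and only if there exists a binary relation η on X such that σ is the symmetric closure of η (σ x y ↔ η x y ∨ η y x), no pair satisfies both η x y and η y x, and (X, η) is unary FA-presentable (that is, (X, σ) is obtained from a unary FA-presentable directed forest by forgetting edge directions). -/

import Mathlib

/-- The convolution word of the pair `(m, n)`, over the three-letter alphabet `Fin 3`
(`0` plays the role of `s`, `1` of `l`, `2` of `r`). -/
def convWord (m n : ℕ) : List (Fin 3) :=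
  List.replicate (min m n) 0 ++ List.replicate (m - min m n) 1 ++
    List.replicate (n - min m n) 2

/-- The convolution language of a binary relation on `ℕ`. -/
def convLang (R : ℕ → ℕ → Prop) : Language (Fin 3) :=
  {w | ∃ m n, R m n ∧ w = convWord m n}

/-- A binary relation on `ℕ` is regular if its convolution language is regular. -/
def RegularRel (R : ℕ → ℕ → Prop) : Prop :=
  (convLang R).IsRegular
/-- The unary language over a one-letter alphabet associated to a set `L ⊆ ℕ`,
identifying `a^n` with `n`. -/
def unaryLang (L : Set ℕ) : Language Unit :=
  {w | w.length ∈ L}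

namespace S18

/-! ### periodicity helpers -/

lemma per_mul {Φ : ℕ → Prop} {T P : ℕ} (h : ∀ x, T ≤ x → (Φ (x + P) ↔ Φ x)) (c : ℕ) :
    ∀ x, T ≤ x → (Φ (x + c * P) ↔ Φ x) := by
  induction c with
  | zero => simp
  | succ c ih =>
    intro x hx
    have e : x + (c + 1) * P = (x + P) + c * P := by ring
    rw [e]
    exact (ih (x + P) (by omega)).trans (h x hx)

lemma per_dvd {Φ : ℕ → Prop} {T T' P P' : ℕ} (h : ∀ x, T ≤ x → (Φ (x + P) ↔ Φ x))
    (hT : T ≤ T') (hP : P ∣ P') : ∀ x, T' ≤ x → (Φ (x + P') ↔ Φ x) := by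
  obtain ⟨c, rfl⟩ := hP
  intro x hx
  have h2 := per_mul h c x (le_trans hT hx)
  rwa [show x + c * P = x + P * c by ring] at h2

/-! ### the cut congruence -/

def cut (T P n : ℕ) : ℕ := if n < T + P then n else T + (n - T) % P

lemma cut_lt {P : ℕ} (hP : 0 < P) (T n : ℕ) : cut T P n < T + P := by
  unfold cut; split
  · assumption
  · have := Nat.mod_lt (n - T) hP; omega

lemma cut_small {T P n : ℕ} (h : n < T + P) : cut T P n = n := if_pos h

lemma cut_eq_zero_iff {T P : ℕ} (hT : 0 < T) (n : ℕ) : cut T P n = 0 ↔ n = 0 := by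
  unfold cut; split
  · simp
  · constructor
    · intro h; omega
    · intro h; omega

lemma cut_decomp (T P : ℕ) (hP : 0 < P) (n : ℕ) :
    ∃ q, n = cut T P n + q * P ∧ (q = 0 ∨ T ≤ cut T P n) := by
  by_cases h : n < T + P
  · exact ⟨0, by rw [cut_small h]; omega, Or.inl rfl⟩
  · refine ⟨(n - T) / P, ?_, Or.inr ?_⟩
    · unfold cut; rw [if_neg h]
      calc n = T + (n - T) := by omega
      _ = T + ((n - T) % P + P * ((n - T) / P)) := by rw [Nat.mod_add_div]
      _ = (T + (n - T) % P) + ((n - T) / P) * P := by ring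
    · unfold cut; rw [if_neg h]; omega

lemma cut_add_P {T P : ℕ} (hP : 0 < P) {x : ℕ} (hx : T ≤ x) :
    cut T P (x + P) = cut T P x := by
  have h1 : ¬ (x + P < T + P) := by omega
  unfold cut
  rw [if_neg h1]
  have h2 : x + P - T = (x - T) + P := by omega
  rw [h2, Nat.add_mod_right]
  split
  · have h3 : x - T < P := by omega
    rw [Nat.mod_eq_of_lt h3]; omega
  · rfl

lemma cut_add_mul {T P : ℕ} (hP : 0 < P) {x : ℕ} (hx : T ≤ x) (q : ℕ) :
    cut T P (x + q * P) = cut T P x := by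
  induction q with
  | zero => simp
  | succ q ih =>
    have e : x + (q + 1) * P = (x + q * P) + P := by ring
    rw [e, cut_add_P hP (by omega), ih]

lemma cut_add_left (T P : ℕ) (hP : 0 < P) (a b : ℕ) :
    cut T P (a + b) = cut T P (cut T P a + b) := by
  obtain ⟨q, hq, hcase⟩ := cut_decomp T P hP a
  rcases hcase with rfl | hTa
  · simp only [Nat.zero_mul, Nat.add_zero] at hq
    rw [← hq]
  · conv_lhs => rw [hq]
    have e : cut T P a + q * P + b = (cut T P a + b) + q * P := by ring
    rw [e, cut_add_mul hP (by omega)]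

lemma per_cut {Φ : ℕ → Prop} {T P : ℕ} (hP : 0 < P)
    (h : ∀ x, T ≤ x → (Φ (x + P) ↔ Φ x)) (n : ℕ) :
    Φ (cut T P n) ↔ Φ n := by
  obtain ⟨q, hq, hcase⟩ := cut_decomp T P hP n
  rcases hcase with rfl | hT'
  · simp only [Nat.zero_mul, Nat.add_zero] at hq
    rw [← hq]
  · conv_rhs => rw [hq]
    exact (per_mul h q _ hT').symm


/-! ### parsing words of the convolution shape -/

def pstep : Option (ℕ × ℕ × ℕ) → Fin 3 → Option (ℕ × ℕ × ℕ)
  | none, _ => none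
  | some (a, b, c), ℓ =>
    if ℓ = 0 then (if b = 0 ∧ c = 0 then some (a + 1, b, c) else none)
    else if ℓ = 1 then (if c = 0 then some (a, b + 1, c) else none)
    else (if b = 0 then some (a, b, c + 1) else none)

def parse (w : List (Fin 3)) : Option (ℕ × ℕ × ℕ) := w.foldl pstep (some (0, 0, 0))

lemma foldl_rep0 (k : ℕ) : ∀ a : ℕ,
    List.foldl pstep (some (a, 0, 0)) (List.replicate k 0) = some (a + k, 0, 0) := by
  induction k with
  | zero => intro a; simp
  | succ k ih =>
    intro a
    rw [List.replicate_succ, List.foldl_cons]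
    have e : pstep (some (a, 0, 0)) 0 = some (a + 1, 0, 0) := by simp [pstep]
    rw [e, ih]
    congr 2
    omega

lemma foldl_rep1 (k : ℕ) : ∀ a b : ℕ,
    List.foldl pstep (some (a, b, 0)) (List.replicate k 1) = some (a, b + k, 0) := by
  induction k with
  | zero => intro a b; simp
  | succ k ih =>
    intro a b
    rw [List.replicate_succ, List.foldl_cons]
    have e : pstep (some (a, b, 0)) 1 = some (a, b + 1, 0) := by simp [pstep]
    rw [e, ih]
    congr 3
    omega

lemma foldl_rep2 (k : ℕ) : ∀ a c : ℕ,
    List.foldl pstep (some (a, 0, c)) (List.replicate k 2) = some (a, 0, c + k) := by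
  induction k with
  | zero => intro a c; simp
  | succ k ih =>
    intro a c
    rw [List.replicate_succ, List.foldl_cons]
    have e : pstep (some (a, 0, c)) 2 = some (a, 0, c + 1) := by simp [pstep]
    rw [e, ih]
    congr 3
    omega

lemma parse_concat {b c : ℕ} (a : ℕ) (h : b = 0 ∨ c = 0) :
    parse (List.replicate a 0 ++ List.replicate b 1 ++ List.replicate c 2) = some (a, b, c) := by
  unfold parse
  rw [List.foldl_append, List.foldl_append]
  rcases h with rfl | rfl
  · rw [foldl_rep0, List.replicate_zero, List.foldl_nil, foldl_rep2]
    simp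
  · rw [foldl_rep0, foldl_rep1, List.replicate_zero, List.foldl_nil]
    simp

lemma parse_some : ∀ {w : List (Fin 3)} {a b c : ℕ}, parse w = some (a, b, c) →
    (b = 0 ∨ c = 0) ∧ w = List.replicate a 0 ++ List.replicate b 1 ++ List.replicate c 2 := by
  intro w
  induction w using List.reverseRecOn with
  | nil =>
    intro a b c h
    unfold parse at h
    simp only [List.foldl_nil, Option.some_inj, Prod.mk.injEq] at h
    obtain ⟨rfl, rfl, rfl⟩ := h
    simp
  | append_singleton w ℓ ih =>
    intro a b c h
    have hw : parse (w ++ [ℓ]) = pstep (parse w) ℓ := by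
      unfold parse
      rw [List.foldl_append, List.foldl_cons, List.foldl_nil]
    rw [hw] at h
    cases hp : parse w with
    | none => rw [hp] at h; exact absurd h (by simp [pstep])
    | some s =>
      obtain ⟨a', b', c'⟩ := s
      rw [hp] at h
      obtain ⟨hbc', hw'⟩ := ih hp
      simp only [pstep] at h
      by_cases h0 : ℓ = 0
      · rw [if_pos h0] at h
        split_ifs at h with hcond
        · obtain ⟨rfl, rfl⟩ := hcond
          simp only [Option.some_inj, Prod.mk.injEq] at h
          obtain ⟨rfl, rfl, rfl⟩ := h
          subst h0
          refine ⟨Or.inl rfl, ?_⟩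
          rw [hw']
          simp [List.replicate_succ']
      · rw [if_neg h0] at h
        by_cases h1 : ℓ = 1
        · rw [if_pos h1] at h
          split_ifs at h with hcond
          · subst hcond
            simp only [Option.some_inj, Prod.mk.injEq] at h
            obtain ⟨rfl, rfl, rfl⟩ := h
            subst h1
            refine ⟨Or.inr rfl, ?_⟩
            rw [hw']
            simp [List.replicate_succ', List.append_assoc]
        · rw [if_neg h1] at h
          have v0 : ℓ.val ≠ 0 := fun hv => h0 (Fin.ext (by simpa using hv))
          have v1 : ℓ.val ≠ 1 := fun hv => h1 (Fin.ext (by simpa using hv))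
          have hlt := ℓ.isLt
          have h2 : ℓ = 2 := Fin.ext (by simp; omega)
          split_ifs at h with hcond
          · subst hcond
            simp only [Option.some_inj, Prod.mk.injEq] at h
            obtain ⟨rfl, rfl, rfl⟩ := h
            subst h2
            refine ⟨Or.inl rfl, ?_⟩
            rw [hw']
            simp [List.replicate_succ', List.append_assoc]

lemma parse_convWord (m n : ℕ) :
    parse (convWord m n) = some (min m n, m - min m n, n - min m n) := by
  unfold convWord
  exact parse_concat _ (by omega)

lemma mem_convLang {R : ℕ → ℕ → Prop} {w : List (Fin 3)} :
    w ∈ convLang R ↔ ∃ a b c, parse w = some (a, b, c) ∧ R (a + b) (a + c) := by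
  constructor
  · rintro ⟨m, n, hR, rfl⟩
    refine ⟨min m n, m - min m n, n - min m n, parse_convWord m n, ?_⟩
    have e1 : min m n + (m - min m n) = m := by omega
    have e2 : min m n + (n - min m n) = n := by omega
    rw [e1, e2]; exact hR
  · rintro ⟨a, b, c, hp, hR⟩
    obtain ⟨hbc, rfl⟩ := parse_some hp
    refine ⟨a + b, a + c, hR, ?_⟩
    unfold convWord
    have e1 : min (a + b) (a + c) = a := by omega
    rw [e1]
    have e2 : a + b - a = b := by omega
    have e3 : a + c - a = c := by omega
    rw [e2, e3]


/-! ### pumping data -/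

def EPer (T P : ℕ) (S : Set ℕ) : Prop := ∀ n, T ≤ n → (n + P ∈ S ↔ n ∈ S)

def RPump (T P : ℕ) (R : ℕ → ℕ → Prop) : Prop :=
  (∀ k u, T ≤ k → (R (k + P + u) (k + P) ↔ R (k + u) k)) ∧
  (∀ k u, T ≤ k → (R (k + P) (k + P + u) ↔ R k (k + u))) ∧
  (∀ m d, T ≤ d → (R m (m + (d + P)) ↔ R m (m + d))) ∧
  (∀ m d, T ≤ d → (R (m + (d + P)) m ↔ R (m + d) m))

lemma EPer.mono {S : Set ℕ} {T T' P P' : ℕ} (h : EPer T P S) (hT : T ≤ T') (hP : P ∣ P') :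
    EPer T' P' S :=
  per_dvd (Φ := fun n => n ∈ S) h hT hP

lemma RPump.mono {R : ℕ → ℕ → Prop} {T T' P P' : ℕ} (h : RPump T P R) (hT : T ≤ T')
    (hP : P ∣ P') : RPump T' P' R := by
  obtain ⟨h1, h2, h3, h4⟩ := h
  refine ⟨fun k u hk => ?_, fun k u hk => ?_, fun m d hd => ?_, fun m d hd => ?_⟩
  · exact per_dvd (Φ := fun x => R (x + u) x)
      (fun x hx => by simpa [Nat.add_right_comm] using h1 x u hx) hT hP k hk
  · exact per_dvd (Φ := fun x => R x (x + u))
      (fun x hx => by simpa [Nat.add_right_comm] using h2 x u hx) hT hP k hk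
  · exact per_dvd (Φ := fun x => R m (m + x))
      (fun x hx => by simpa [Nat.add_assoc] using h3 m x hx) hT hP d hd
  · exact per_dvd (Φ := fun x => R (m + x) m)
      (fun x hx => by simpa [Nat.add_assoc] using h4 m x hx) hT hP d hd

/-! ### eventually periodic iterates -/

lemma exists_iter_period {Q : Type} [Fintype Q] (f : Q → Q) :
    ∃ t p, 0 < p ∧ ∀ m, t ≤ m → f^[m + p] = f^[m] := by
  have : ¬ Function.Injective fun n : ℕ => f^[n] := by
    intro hinj
    exact Set.infinite_range_of_injective hinj (Set.toFinite _)
  rw [Function.not_injective_iff] at this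
  obtain ⟨i, j, hij, hne⟩ := this
  rcases Nat.lt_or_ge i j with hlt | hge
  · refine ⟨i, j - i, by omega, fun m hm => ?_⟩
    have e1 : m + (j - i) = (m - i) + j := by omega
    have e2 : m = (m - i) + i := by omega
    rw [e1, Function.iterate_add, ← hij, ← Function.iterate_add, ← e2]
  · have hlt : j < i := by omega
    refine ⟨j, i - j, by omega, fun m hm => ?_⟩
    have e1 : m + (i - j) = (m - j) + i := by omega
    have e2 : m = (m - j) + j := by omega
    rw [e1, Function.iterate_add, hij, ← Function.iterate_add, ← e2]

lemma iter_per_dvd {Q : Type} {f : Q → Q} {t p : ℕ} (h : ∀ m, t ≤ m → f^[m + p] = f^[m])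
    {P : ℕ} (hdvd : p ∣ P) : ∀ m, t ≤ m → f^[m + P] = f^[m] := by
  obtain ⟨c, rfl⟩ := hdvd
  induction c with
  | zero => simp
  | succ c ih =>
    intro m hm
    have e : m + p * (c + 1) = (m + p * c) + p := by ring
    rw [e, h _ (by omega), ih m hm]

/-! ### evalFrom on replicate -/

lemma evalFrom_replicate {Q : Type} (M : DFA (Fin 3) Q) (ℓ : Fin 3) (k : ℕ) : ∀ s : Q,
    M.evalFrom s (List.replicate k ℓ) = (fun q => M.step q ℓ)^[k] s := by
  induction k with
  | zero => intro s; rfl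
  | succ k ih =>
    intro s
    rw [List.replicate_succ]
    show M.evalFrom (M.step s ℓ) (List.replicate k ℓ) = _
    rw [ih, Function.iterate_succ_apply]

/-! ### extraction of pumping data from regularity -/

lemma regular_rpump {R : ℕ → ℕ → Prop} (h : RegularRel R) :
    ∃ T P, 0 < T ∧ 0 < P ∧ RPump T P R := by
  obtain ⟨Q, fQ, M, hM⟩ := h
  obtain ⟨t0, p0, hp0, h0⟩ := exists_iter_period (fun q => M.step q 0)
  obtain ⟨t1, p1, hp1, h1⟩ := exists_iter_period (fun q => M.step q 1)
  obtain ⟨t2, p2, hp2, h2⟩ := exists_iter_period (fun q => M.step q 2)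
  refine ⟨t0 + t1 + t2 + 1, p0 * p1 * p2, by omega, by positivity, ?_⟩
  set T := t0 + t1 + t2 + 1
  set P := p0 * p1 * p2
  have hdvd0 : p0 ∣ P := ⟨p1 * p2, by ring⟩
  have hdvd1 : p1 ∣ P := ⟨p0 * p2, by ring⟩
  have hdvd2 : p2 ∣ P := ⟨p0 * p1, by ring⟩
  have hRst : ∀ m n, R m n ↔
      (fun q => M.step q 2)^[n - min m n]
        ((fun q => M.step q 1)^[m - min m n]
          ((fun q => M.step q 0)^[min m n] M.start)) ∈ M.accept := by
    intro m n
    have hmem : R m n ↔ convWord m n ∈ convLang R := by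
      rw [mem_convLang]
      constructor
      · intro hR
        refine ⟨min m n, m - min m n, n - min m n, parse_convWord m n, ?_⟩
        have e1 : min m n + (m - min m n) = m := by omega
        have e2 : min m n + (n - min m n) = n := by omega
        rw [e1, e2]; exact hR
      · rintro ⟨a, b, c, hp, hR⟩
        rw [parse_convWord] at hp
        simp only [Option.some_inj, Prod.mk.injEq] at hp
        obtain ⟨e1, e2, e3⟩ := hp
        have em : a + b = m := by omega
        have en : a + c = n := by omega
        rwa [em, en] at hR
    rw [hmem, ← hM, DFA.mem_accepts]
    show M.evalFrom M.start (convWord m n) ∈ M.accept ↔ _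
    unfold convWord
    rw [DFA.evalFrom_of_append, DFA.evalFrom_of_append,
      evalFrom_replicate, evalFrom_replicate, evalFrom_replicate]
  refine ⟨fun k u hk => ?_, fun k u hk => ?_, fun m d hd => ?_, fun m d hd => ?_⟩
  · rw [hRst, hRst]
    have e1 : min (k + P + u) (k + P) = k + P := by omega
    have e2 : min (k + u) k = k := by omega
    rw [e1, e2]
    have e3 : k + P + u - (k + P) = u := by omega
    have e4 : k + P - (k + P) = 0 := by omega
    have e5 : k + u - k = u := by omega
    have e6 : k - k = 0 := by omega
    rw [e3, e4, e5, e6]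
    rw [iter_per_dvd h0 hdvd0 k (by omega)]
  · rw [hRst, hRst]
    have e1 : min (k + P) (k + P + u) = k + P := by omega
    have e2 : min k (k + u) = k := by omega
    rw [e1, e2]
    have e3 : k + P + u - (k + P) = u := by omega
    have e4 : k + P - (k + P) = 0 := by omega
    have e5 : k + u - k = u := by omega
    have e6 : k - k = 0 := by omega
    rw [e3, e4, e5, e6]
    rw [iter_per_dvd h0 hdvd0 k (by omega)]
  · rw [hRst, hRst]
    have e1 : min m (m + (d + P)) = m := by omega
    have e2 : min m (m + d) = m := by omega
    rw [e1, e2]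
    have e3 : m + (d + P) - m = d + P := by omega
    have e4 : m - m = 0 := by omega
    have e5 : m + d - m = d := by omega
    rw [e3, e4, e5]
    rw [iter_per_dvd h2 hdvd2 d (by omega)]
  · rw [hRst, hRst]
    have e1 : min (m + (d + P)) m = m := by omega
    have e2 : min (m + d) m = m := by omega
    rw [e1, e2]
    have e3 : m + (d + P) - m = d + P := by omega
    have e4 : m - m = 0 := by omega
    have e5 : m + d - m = d := by omega
    rw [e3, e4, e5]
    rw [iter_per_dvd h1 hdvd1 d (by omega)]

lemma regular_eper {L : Set ℕ} (h : (unaryLang L).IsRegular) :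
    ∃ T P, 0 < T ∧ 0 < P ∧ EPer T P L := by
  obtain ⟨Q, fQ, M, hM⟩ := h
  obtain ⟨t, p, hp, hper⟩ := exists_iter_period (fun q => M.step q ())
  refine ⟨t + 1, p, by omega, hp, fun n hn => ?_⟩
  have key : ∀ k : ℕ, k ∈ L ↔ (fun q => M.step q ())^[k] M.start ∈ M.accept := by
    intro k
    have h1 : (List.replicate k () ∈ unaryLang L) ↔ k ∈ L := by
      show (List.replicate k ()).length ∈ L ↔ k ∈ L
      rw [List.length_replicate]
    rw [← h1, ← hM, DFA.mem_accepts]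
    show M.evalFrom M.start (List.replicate k ()) ∈ M.accept ↔ _
    have : ∀ (j : ℕ) (s : Q), M.evalFrom s (List.replicate j ()) =
        (fun q => M.step q ())^[j] s := by
      intro j
      induction j with
      | zero => intro s; rfl
      | succ j ih =>
        intro s
        rw [List.replicate_succ]
        show M.evalFrom (M.step s ()) (List.replicate j ()) = _
        rw [ih, Function.iterate_succ_apply]
    rw [this]
  rw [key, key, hper n (by omega)]


/-! ### building a DFA from pumping data -/

def fc (T P : ℕ) (hP : 0 < P) (n : ℕ) : Fin (T + P) := ⟨cut T P n, cut_lt hP T n⟩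

def qstep (T P : ℕ) (hP : 0 < P) :
    Option (Fin (T + P) × Fin (T + P) × Fin (T + P)) → Fin 3 →
      Option (Fin (T + P) × Fin (T + P) × Fin (T + P))
  | none, _ => none
  | some (a, b, c), ℓ =>
    if ℓ = 0 then
      (if b = fc T P hP 0 ∧ c = fc T P hP 0 then some (fc T P hP (a.val + 1), b, c) else none)
    else if ℓ = 1 then (if c = fc T P hP 0 then some (a, fc T P hP (b.val + 1), c) else none)
    else (if b = fc T P hP 0 then some (a, b, fc T P hP (c.val + 1)) else none)

def hmap (T P : ℕ) (hP : 0 < P) :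
    Option (ℕ × ℕ × ℕ) → Option (Fin (T + P) × Fin (T + P) × Fin (T + P)) :=
  Option.map (fun x => (fc T P hP x.1, fc T P hP x.2.1, fc T P hP x.2.2))

def mDFA (T P : ℕ) (hP : 0 < P) (R : ℕ → ℕ → Prop) :
    DFA (Fin 3) (Option (Fin (T + P) × Fin (T + P) × Fin (T + P))) :=
  ⟨qstep T P hP, some (fc T P hP 0, fc T P hP 0, fc T P hP 0),
    {s | ∃ a b c : Fin (T + P), s = some (a, b, c) ∧ R (a.val + b.val) (a.val + c.val)}⟩

lemma fc_zero_iff {T P : ℕ} (hT : 0 < T) (hP : 0 < P) (n : ℕ) :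
    fc T P hP n = fc T P hP 0 ↔ n = 0 := by
  rw [Fin.ext_iff]
  show cut T P n = cut T P 0 ↔ n = 0
  rw [cut_small (by omega : (0:ℕ) < T + P)]
  exact cut_eq_zero_iff hT n

lemma fc_succ {T P : ℕ} (hP : 0 < P) (n : ℕ) :
    fc T P hP (n + 1) = fc T P hP ((fc T P hP n).val + 1) := by
  apply Fin.ext
  show cut T P (n + 1) = cut T P (cut T P n + 1)
  exact cut_add_left T P hP n 1

lemma hom_step {T P : ℕ} (hT : 0 < T) (hP : 0 < P) (s : Option (ℕ × ℕ × ℕ)) (ℓ : Fin 3) :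
    qstep T P hP (hmap T P hP s) ℓ = hmap T P hP (pstep s ℓ) := by
  cases s with
  | none => rfl
  | some x =>
    obtain ⟨a, b, c⟩ := x
    show qstep T P hP (some (fc T P hP a, fc T P hP b, fc T P hP c)) ℓ
      = hmap T P hP (pstep (some (a, b, c)) ℓ)
    simp only [pstep, qstep]
    by_cases h0 : ℓ = 0
    · rw [if_pos h0, if_pos h0]
      by_cases hcond : b = 0 ∧ c = 0
      · rw [if_pos ⟨(fc_zero_iff hT hP b).mpr hcond.1, (fc_zero_iff hT hP c).mpr hcond.2⟩,
          if_pos hcond]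
        show some (fc T P hP ((fc T P hP a).val + 1), _, _) = some (fc T P hP (a + 1), _, _)
        rw [← fc_succ hP a]
      · rw [if_neg (fun hh =>
          hcond ⟨(fc_zero_iff hT hP b).mp hh.1, (fc_zero_iff hT hP c).mp hh.2⟩), if_neg hcond]
        rfl
    · rw [if_neg h0, if_neg h0]
      by_cases h1 : ℓ = 1
      · rw [if_pos h1, if_pos h1]
        by_cases hcond : c = 0
        · rw [if_pos ((fc_zero_iff hT hP c).mpr hcond), if_pos hcond]
          show some (_, fc T P hP ((fc T P hP b).val + 1), _) = some (_, fc T P hP (b + 1), _)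
          rw [← fc_succ hP b]
        · rw [if_neg (fun hh => hcond ((fc_zero_iff hT hP c).mp hh)), if_neg hcond]
          rfl
      · rw [if_neg h1, if_neg h1]
        by_cases hcond : b = 0
        · rw [if_pos ((fc_zero_iff hT hP b).mpr hcond), if_pos hcond]
          show some (_, _, fc T P hP ((fc T P hP c).val + 1)) = some (_, _, fc T P hP (c + 1))
          rw [← fc_succ hP c]
        · rw [if_neg (fun hh => hcond ((fc_zero_iff hT hP b).mp hh)), if_neg hcond]
          rfl

lemma mDFA_eval {T P : ℕ} (hT : 0 < T) (hP : 0 < P) (R : ℕ → ℕ → Prop)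
    (w : List (Fin 3)) : (mDFA T P hP R).eval w = hmap T P hP (parse w) := by
  have main : ∀ (w : List (Fin 3)) (s : Option (ℕ × ℕ × ℕ)),
      (mDFA T P hP R).evalFrom (hmap T P hP s) w = hmap T P hP (List.foldl pstep s w) := by
    intro w
    induction w with
    | nil => intro s; rfl
    | cons ℓ w ih =>
      intro s
      show (mDFA T P hP R).evalFrom (qstep T P hP (hmap T P hP s) ℓ) w = _
      rw [hom_step hT hP s ℓ]
      exact ih (pstep s ℓ)
  exact main w (some (0, 0, 0))

lemma master {R : ℕ → ℕ → Prop} {T P : ℕ} (hT : 0 < T) (hP : 0 < P) (h : RPump T P R) :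
    RegularRel R := by
  obtain ⟨h1, h2, h3, h4⟩ := h
  have key : ∀ A B C : ℕ, (B = 0 ∨ C = 0) →
      (R (cut T P A + cut T P B) (cut T P A + cut T P C) ↔ R (A + B) (A + C)) := by
    intro A B C hbc
    rcases hbc with rfl | rfl
    · rw [cut_small (by omega : (0:ℕ) < T + P), Nat.add_zero, Nat.add_zero]
      have s1 : R (cut T P A) (cut T P A + C) ↔ R A (A + C) :=
        per_cut (Φ := fun x => R x (x + C)) hP (fun x hx => h2 x C hx) A
      have s2 : R (cut T P A) (cut T P A + cut T P C) ↔ R (cut T P A) (cut T P A + C) :=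
        per_cut (Φ := fun d => R (cut T P A) (cut T P A + d)) hP
          (fun d hd => h3 (cut T P A) d hd) C
      exact s2.trans s1
    · rw [cut_small (by omega : (0:ℕ) < T + P), Nat.add_zero, Nat.add_zero]
      have s1 : R (cut T P A + B) (cut T P A) ↔ R (A + B) A :=
        per_cut (Φ := fun x => R (x + B) x) hP (fun x hx => h1 x B hx) A
      have s2 : R (cut T P A + cut T P B) (cut T P A) ↔ R (cut T P A + B) (cut T P A) :=
        per_cut (Φ := fun d => R (cut T P A + d) (cut T P A)) hP
          (fun d hd => h4 (cut T P A) d hd) B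
      exact s2.trans s1
  refine ⟨_, inferInstance, mDFA T P hP R, ?_⟩
  ext w
  rw [DFA.mem_accepts, mDFA_eval hT hP]
  cases hp : parse w with
  | none =>
    constructor
    · rintro ⟨a, b, c, habs, -⟩
      exact absurd habs (by simp [hmap])
    · intro hmem
      rw [mem_convLang] at hmem
      obtain ⟨a, b, c, hpw, -⟩ := hmem
      rw [hp] at hpw
      exact absurd hpw (by simp)
  | some x =>
    obtain ⟨A, B, C⟩ := x
    obtain ⟨hbc, -⟩ := parse_some hp
    have hkey := key A B C hbc
    constructor
    · rintro ⟨a, b, c, hsome, hR⟩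
      have hs : some (fc T P hP A, fc T P hP B, fc T P hP C) = some (a, b, c) := hsome
      rw [Option.some_inj, Prod.mk.injEq, Prod.mk.injEq] at hs
      obtain ⟨rfl, rfl, rfl⟩ := hs
      rw [mem_convLang]
      exact ⟨A, B, C, hp, hkey.mp hR⟩
    · intro hmem
      rw [mem_convLang] at hmem
      obtain ⟨a', b', c', hp', hR'⟩ := hmem
      rw [hp, Option.some_inj, Prod.mk.injEq, Prod.mk.injEq] at hp'
      obtain ⟨rfl, rfl, rfl⟩ := hp'
      exact ⟨fc T P hP A, fc T P hP B, fc T P hP C, rfl, hkey.mpr hR'⟩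

/-! ### building a unary DFA from an eventually periodic set -/

def uDFA (T P : ℕ) (hP : 0 < P) (S : Set ℕ) : DFA Unit (Fin (T + P)) :=
  ⟨fun q _ => fc T P hP (q.val + 1), fc T P hP 0, {q | q.val ∈ S}⟩

lemma eper_regular {S : Set ℕ} {T P : ℕ} (hP : 0 < P) (h : EPer T P S) :
    (unaryLang S).IsRegular := by
  refine ⟨Fin (T + P), inferInstance, uDFA T P hP S, ?_⟩
  have heval : ∀ (w : List Unit) (n : ℕ),
      (uDFA T P hP S).evalFrom (fc T P hP n) w = fc T P hP (n + w.length) := by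
    intro w
    induction w with
    | nil => intro n; rfl
    | cons u w ih =>
      intro n
      show (uDFA T P hP S).evalFrom (fc T P hP ((fc T P hP n).val + 1)) w = _
      rw [← fc_succ hP n, ih (n + 1)]
      congr 1
      simp [List.length_cons]
      omega
  ext w
  rw [DFA.mem_accepts]
  show (uDFA T P hP S).evalFrom (fc T P hP 0) w ∈ _ ↔ _
  rw [heval w 0]
  show cut T P (0 + w.length) ∈ S ↔ w.length ∈ S
  rw [Nat.zero_add]
  exact per_cut (Φ := fun n => n ∈ S) hP (fun x hx => h x hx) w.length


/-! ### periodicity of the "has a smaller equivalent element" set -/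

lemma bper {E : ℕ → ℕ → Prop} {T P : ℕ} (hT : 0 < T) (hP : 0 < P) (h : RPump T P E) :
    ∀ n, 2 * T + P ≤ n → ((∃ m, m < n + P ∧ E m (n + P)) ↔ (∃ m, m < n ∧ E m n)) := by
  obtain ⟨h1, h2, h3, h4⟩ := h
  intro n hn
  constructor
  · rintro ⟨m, hm, hE⟩
    rcases Nat.lt_or_ge (n + P - m) (T + P) with hdlt | hdge
    · have hmge : T + P ≤ m := by omega
      have hh := h2 (m - P) (n + P - m) (by omega)
      rw [show m - P + P = m by omega] at hh
      rw [show m + (n + P - m) = n + P by omega] at hh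
      rw [show m - P + (n + P - m) = n by omega] at hh
      exact ⟨m - P, by omega, hh.mp hE⟩
    · have hh := h3 m (n + P - m - P) (by omega)
      rw [show m + (n + P - m - P + P) = n + P by omega] at hh
      rw [show m + (n + P - m - P) = n by omega] at hh
      exact ⟨m, by omega, hh.mp hE⟩
  · rintro ⟨m, hm, hE⟩
    rcases Nat.lt_or_ge (n - m) T with hdlt | hdge
    · have hh := h2 m (n - m) (by omega)
      rw [show m + P + (n - m) = n + P by omega] at hh
      rw [show m + (n - m) = n by omega] at hh
      exact ⟨m + P, by omega, hh.mpr hE⟩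
    · have hh := h3 m (n - m) (by omega)
      rw [show m + (n - m + P) = n + P by omega] at hh
      rw [show m + (n - m) = n by omega] at hh
      exact ⟨m, by omega, hh.mpr hE⟩


end S18

/-- A (countable) structure `(X, ρ)` with one binary relation is unary FA-presentable
if there are a set `L ⊆ ℕ` whose unary language is regular and a surjection
`φ : L → X` such that equality and the relation, pulled back along `φ`, are
regular relations. -/
def UnaryFAPresentable {X : Type*} (ρ : X → X → Prop) : Prop :=
  ∃ L : Set ℕ, (unaryLang L).IsRegular ∧
    ∃ φ : ℕ → X, (∀ x, ∃ n ∈ L, φ n = x) ∧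
      RegularRel (fun m n => m ∈ L ∧ n ∈ L ∧ φ m = φ n) ∧
      RegularRel (fun m n => m ∈ L ∧ n ∈ L ∧ ρ (φ m) (φ n))

/-- The simple graph of a symmetric irreflexive relation. -/
def symGraph {X : Type*} (σ : X → X → Prop) (hs : Symmetric σ) (hi : Irreflexive σ) :
    SimpleGraph X where
  Adj := σ
  symm := ⟨fun _ _ h => hs h⟩
  loopless := ⟨hi⟩

theorem stmt18 {X : Type*} [Countable X] (σ : X → X → Prop)
    (hs : Symmetric σ) (hi : Irreflexive σ)
    (hacyc : (symGraph σ hs hi).IsAcyclic) :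
    UnaryFAPresentable σ ↔
      ∃ η : X → X → Prop,
        (∀ x y, σ x y ↔ (η x y ∨ η y x)) ∧
        (∀ x y, ¬ (η x y ∧ η y x)) ∧
        UnaryFAPresentable η := by
  constructor
  · rintro ⟨L, hL, φ, hsur, hEq, hRσ⟩
    classical
    set μ : X → ℕ := fun x => sInf {n | n ∈ L ∧ φ n = x} with hμdef
    have hsetne : ∀ x : X, {n | n ∈ L ∧ φ n = x}.Nonempty := by
      intro x
      obtain ⟨n, hn, he⟩ := hsur x
      exact ⟨n, hn, he⟩
    have hμmem : ∀ x : X, μ x ∈ L ∧ φ (μ x) = x := by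
      intro x
      rw [hμdef]
      exact Nat.sInf_mem (hsetne x)
    have hμle : ∀ (x : X) (n : ℕ), n ∈ L → φ n = x → μ x ≤ n := by
      intro x n h1 h2
      rw [hμdef]
      exact Nat.sInf_le ⟨h1, h2⟩
    refine ⟨fun x y => σ x y ∧ μ x < μ y, ?_, ?_, ?_⟩
    · intro x y
      constructor
      · intro hxy
        have hne : x ≠ y := fun hh => hi x (hh ▸ hxy)
        have hμne : μ x ≠ μ y := fun hh => hne (by rw [← (hμmem x).2, ← (hμmem y).2, hh])
        rcases Nat.lt_or_ge (μ x) (μ y) with hlt | hge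
        · exact Or.inl ⟨hxy, hlt⟩
        · exact Or.inr ⟨hs hxy, by omega⟩
      · rintro (⟨hh, -⟩ | ⟨hh, -⟩)
        · exact hh
        · exact hs hh
    · rintro x y ⟨⟨-, hh1⟩, ⟨-, hh2⟩⟩
      omega
    · -- the directed relation is unary FA presentable
      obtain ⟨TE, PE, hTE, hPE, hpE⟩ := S18.regular_rpump hEq
      obtain ⟨TS, PS, hTS, hPS, hpS⟩ := S18.regular_rpump hRσ
      obtain ⟨TL, PL, hTL, hPL, hpL⟩ := S18.regular_eper hL
      set T0 := TE + TS + TL with hT0def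
      set P0 := PE * PS * PL with hP0def
      have hT0 : 0 < T0 := by omega
      have hP0 : 0 < P0 := by positivity
      have hdvdE : PE ∣ P0 := ⟨PS * PL, by rw [hP0def]; ring⟩
      have hdvdS : PS ∣ P0 := ⟨PE * PL, by rw [hP0def]; ring⟩
      have hdvdL : PL ∣ P0 := ⟨PE * PS, by rw [hP0def]; ring⟩
      set Tf := 2 * T0 + P0 with hTfdef
      have hTf : 0 < Tf := by omega
      set L' : Set ℕ := {n | n ∈ L ∧ μ (φ n) = n} with hL'def
      have hL'mem : ∀ n : ℕ, n ∈ L' ↔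
          (n ∈ L ∧ ¬ ∃ m, m < n ∧ (m ∈ L ∧ n ∈ L ∧ φ m = φ n)) := by
        intro n
        constructor
        · rintro ⟨hnL, hμn⟩
          refine ⟨hnL, ?_⟩
          rintro ⟨m, hmn, hmL, -, hφ⟩
          have := hμle (φ n) m hmL hφ
          omega
        · rintro ⟨hnL, hB⟩
          refine ⟨hnL, ?_⟩
          have hle : μ (φ n) ≤ n := hμle (φ n) n hnL rfl
          rcases Nat.lt_or_ge (μ (φ n)) n with hlt | hge
          · exact absurd ⟨μ (φ n), hlt, (hμmem (φ n)).1, hnL, (hμmem (φ n)).2⟩ hB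
          · omega
      have hpLf : S18.EPer Tf P0 L := hpL.mono (by omega) hdvdL
      have hBiff := S18.bper hT0 hP0 (hpE.mono (by omega) hdvdE)
      have hpL' : S18.EPer Tf P0 L' := by
        intro n hn
        rw [hL'mem (n + P0), hL'mem n]
        exact and_congr (hpLf n hn) (not_congr (hBiff n (by omega)))
      have hmuL' : ∀ n : ℕ, n ∈ L' → μ (φ n) = n := fun n hn => hn.2
      have hEq' : ∀ m n : ℕ, (m ∈ L' ∧ n ∈ L' ∧ φ m = φ n) ↔
          (m ∈ L' ∧ n ∈ L' ∧ m = n) := by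
        intro m n
        constructor
        · rintro ⟨hm, hn, hφ⟩
          exact ⟨hm, hn, by rw [← hmuL' m hm, ← hmuL' n hn, hφ]⟩
        · rintro ⟨hm, hn, rfl⟩
          exact ⟨hm, hn, rfl⟩
      have hRη' : ∀ m n : ℕ, (m ∈ L' ∧ n ∈ L' ∧ (σ (φ m) (φ n) ∧ μ (φ m) < μ (φ n))) ↔
          ((m ∈ L ∧ n ∈ L ∧ σ (φ m) (φ n)) ∧ m ∈ L' ∧ n ∈ L' ∧ m < n) := by
        intro m n
        constructor
        · rintro ⟨hm, hn, hσ, hlt⟩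
          exact ⟨⟨hm.1, hn.1, hσ⟩, hm, hn, by rwa [hmuL' m hm, hmuL' n hn] at hlt⟩
        · rintro ⟨⟨-, -, hσ⟩, hm, hn, hlt⟩
          exact ⟨hm, hn, hσ, by rwa [hmuL' m hm, hmuL' n hn]⟩
      have hpumpEq' : S18.RPump Tf P0 (fun m n => m ∈ L' ∧ n ∈ L' ∧ φ m = φ n) := by
        refine ⟨fun k u hk => ?_, fun k u hk => ?_, fun m d hd => ?_, fun m d hd => ?_⟩
        · simp only [hEq']
          constructor
          · rintro ⟨hm, hn, he⟩
            have hu : u = 0 := by omega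
            subst hu
            exact ⟨(hpL' k hk).mp hn, (hpL' k hk).mp hn, rfl⟩
          · rintro ⟨hm, hn, he⟩
            have hu : u = 0 := by omega
            subst hu
            exact ⟨(hpL' k hk).mpr hn, (hpL' k hk).mpr hn, rfl⟩
        · simp only [hEq']
          constructor
          · rintro ⟨hm, hn, he⟩
            have hu : u = 0 := by omega
            subst hu
            exact ⟨(hpL' k hk).mp hm, (hpL' k hk).mp hm, rfl⟩
          · rintro ⟨hm, hn, he⟩
            have hu : u = 0 := by omega
            subst hu
            exact ⟨(hpL' k hk).mpr hm, (hpL' k hk).mpr hm, rfl⟩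
        · simp only [hEq']
          constructor <;> (rintro ⟨-, -, he⟩; omega)
        · simp only [hEq']
          constructor <;> (rintro ⟨-, -, he⟩; omega)
      have hpSf : S18.RPump Tf P0 (fun m n => m ∈ L ∧ n ∈ L ∧ σ (φ m) (φ n)) :=
        hpS.mono (by omega) hdvdS
      obtain ⟨hS1, hS2, hS3, hS4⟩ := hpSf
      have hpumpR : S18.RPump Tf P0
          (fun m n => m ∈ L' ∧ n ∈ L' ∧ (σ (φ m) (φ n) ∧ μ (φ m) < μ (φ n))) := by
        refine ⟨fun k u hk => ?_, fun k u hk => ?_, fun m d hd => ?_, fun m d hd => ?_⟩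
        · simp only [hRη']
          constructor <;> (rintro ⟨-, -, -, hlt⟩; omega)
        · simp only [hRη']
          constructor
          · rintro ⟨hσ, hm, hn, hlt⟩
            refine ⟨(hS2 k u hk).mp hσ, (hpL' k hk).mp hm, ?_, by omega⟩
            exact (hpL' (k + u) (by omega)).mp
              (by rw [show k + u + P0 = k + P0 + u from by omega]; exact hn)
          · rintro ⟨hσ, hm, hn, hlt⟩
            refine ⟨(hS2 k u hk).mpr hσ, (hpL' k hk).mpr hm, ?_, by omega⟩
            rw [show k + P0 + u = k + u + P0 from by omega]
            exact (hpL' (k + u) (by omega)).mpr hn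
        · simp only [hRη']
          constructor
          · rintro ⟨hσ, hm, hn, hlt⟩
            refine ⟨(hS3 m d hd).mp hσ, hm, ?_, by omega⟩
            exact (hpL' (m + d) (by omega)).mp
              (by rw [show m + d + P0 = m + (d + P0) from by omega]; exact hn)
          · rintro ⟨hσ, hm, hn, hlt⟩
            refine ⟨(hS3 m d hd).mpr hσ, hm, ?_, by omega⟩
            rw [show m + (d + P0) = m + d + P0 from by omega]
            exact (hpL' (m + d) (by omega)).mpr hn
        · simp only [hRη']
          constructor <;> (rintro ⟨-, -, -, hlt⟩; omega)
      refine ⟨L', S18.eper_regular hP0 hpL', φ, ?_, ?_, ?_⟩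
      · intro x
        refine ⟨μ x, ⟨(hμmem x).1, ?_⟩, (hμmem x).2⟩
        rw [(hμmem x).2]
      · exact S18.master hTf hP0 hpumpEq'
      · exact S18.master hTf hP0 hpumpR
  · rintro ⟨η, hση, -, L, hL, φ, hsur, hEq, hRη⟩
    refine ⟨L, hL, φ, hsur, hEq, ?_⟩
    obtain ⟨T, P, hT, hP, hp⟩ := S18.regular_rpump hRη
    obtain ⟨g1, g2, g3, g4⟩ := hp
    have hpt : ∀ m n : ℕ, (m ∈ L ∧ n ∈ L ∧ σ (φ m) (φ n)) ↔
        ((m ∈ L ∧ n ∈ L ∧ η (φ m) (φ n)) ∨ (n ∈ L ∧ m ∈ L ∧ η (φ n) (φ m))) := by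
      intro m n
      rw [hση]
      tauto
    apply S18.master hT hP
    refine ⟨fun k u hk => ?_, fun k u hk => ?_, fun m d hd => ?_, fun m d hd => ?_⟩
    · simp only [hpt]
      exact or_congr (g1 k u hk) (g2 k u hk)
    · simp only [hpt]
      exact or_congr (g2 k u hk) (g1 k u hk)
    · simp only [hpt]
      exact or_congr (g3 m d hd) (g4 m d hd)
    · simp only [hpt]
      exact or_congr (g4 m d hd) (g3 m d hd)
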